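/- Let q be a smooth real-valued 1-periodic function with Fourier coefficients q̂(ξ) = ∫₀¹ e^{−iξx} q(x) dx for ξ ∈ 2πℤ, and for κ > 0 set Q_κ(q) := (2e^{−κ}/(1−e^{−κ})²) · |q̂(0)|²/(4κ²) + ((1−e^{−2κ})/(κ(1−e^{−κ})²)) Σ_{ξ∈2πℤ} |q̂(ξ)|²/(ξ²+4κ²). Then for every κ ≥ 1: (1/κ) Σ_{ξ∈2πℤ} |q̂(ξ)|²/(ξ²+4κ²) ≤ Q_κ(q) ≤ (5/κ) Σ_{ξ∈2πℤ} |q̂(ξ)|²/(ξ²+4κ²), and consequently (1/(4κ³)) ‖q‖²_{H^{-1}} ≤ Q_κ(q) ≤ (5/κ) ‖q‖²_{H^{-1}}. -/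

import Mathlib

open MeasureTheory Complex Real

/-- Fourier coefficients on the circle: `q̂(ξ) = ∫₀¹ e^{-iξx} q(x) dx` for `ξ ∈ 2πℤ`. -/
noncomputable def FC (f : ℝ → ℝ) (ξ : ℝ) : ℂ :=
  ∫ x in (0:ℝ)..1, Complex.exp (-(Complex.I * ξ * x)) * f x

/-- The squared Hilbert--Schmidt norm of `√R₀ q √R₀` on `L²(ℝ/ℤ)`. -/
noncomputable def Qκ (κ : ℝ) (q : ℝ → ℝ) : ℝ :=
  (2 * Real.exp (-κ) / (1 - Real.exp (-κ)) ^ 2) *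
      (‖FC q 0‖ ^ 2 / (4 * κ ^ 2)) +
    ((1 - Real.exp (-2 * κ)) / (κ * (1 - Real.exp (-κ)) ^ 2)) *
      ∑' n : ℤ, ‖FC q (2 * Real.pi * n)‖ ^ 2 /
        ((2 * Real.pi * n) ^ 2 + 4 * κ ^ 2)

lemma FC_abs_le (q : ℝ → ℝ) (ξ : ℝ) :
    ‖FC q ξ‖ ≤ ∫ x in (0:ℝ)..1, |q x| := by
  rw [FC]
  refine le_trans (intervalIntegral.norm_integral_le_integral_norm (by norm_num)) ?_
  apply le_of_eq
  apply intervalIntegral.integral_congr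
  intro x _
  simp only [norm_mul, Complex.norm_exp]
  simp [Complex.mul_re]

lemma summable_f (q : ℝ → ℝ) (κ : ℝ) (hκ : 1 ≤ κ) :
    Summable fun n : ℤ => ‖FC q (2 * Real.pi * n)‖ ^ 2 /
      ((2 * Real.pi * n) ^ 2 + 4 * κ ^ 2) := by
  set M := ∫ x in (0:ℝ)..1, |q x| with hMdef
  have hM : 0 ≤ M := intervalIntegral.integral_nonneg (by norm_num) fun x _ => abs_nonneg _
  apply Summable.of_norm_bounded_eventually (g := fun n : ℤ => M ^ 2 * (1 / (n : ℝ) ^ 2))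
  · exact ((summable_one_div_int_pow (p := 2)).mpr one_lt_two).mul_left _
  · rw [Filter.eventually_cofinite]
    apply Set.Finite.subset (Set.finite_singleton (0 : ℤ))
    intro n hn
    simp only [Set.mem_setOf_eq] at hn
    simp only [Set.mem_singleton_iff]
    by_contra h0
    apply hn
    have hpi := Real.pi_gt_three
    have hn2 : (1 : ℝ) ≤ (n : ℝ) ^ 2 := by
      have : (1 : ℝ) ≤ |(n : ℝ)| := by
        rw [← Int.cast_abs]
        exact_mod_cast Int.one_le_abs (by exact_mod_cast h0)
      nlinarith [_root_.sq_abs (n : ℝ)]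
    have h1 : ‖FC q (2 * Real.pi * n)‖ ^ 2 ≤ M ^ 2 :=
      pow_le_pow_left₀ (norm_nonneg _) (FC_abs_le q _) 2
    have hpin : (1:ℝ) * (n:ℝ)^2 ≤ 4 * Real.pi ^ 2 * (n:ℝ)^2 :=
      mul_le_mul_of_nonneg_right (by nlinarith) (sq_nonneg _)
    have h2 : (n : ℝ) ^ 2 ≤ (2 * Real.pi * n) ^ 2 + 4 * κ ^ 2 := by nlinarith
    rw [Real.norm_eq_abs, _root_.abs_of_nonneg (by positivity), mul_one_div]
    exact div_le_div₀ (by positivity) h1 (by nlinarith) h2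

lemma exp_neg_le (κ : ℝ) : Real.exp (-κ) * κ ≤ Real.exp (-1) := by
  simp only [Real.exp_neg, inv_eq_one_div]
  rw [div_mul_eq_mul_div, div_le_div_iff₀ (Real.exp_pos _) (Real.exp_pos _)]
  have h : Real.exp κ = Real.exp 1 * Real.exp (κ - 1) := by
    rw [← Real.exp_add]; ring_nf
  nlinarith [Real.exp_pos (1:ℝ), Real.add_one_le_exp (κ - 1)]

set_option maxHeartbeats 1000000 in
theorem circle_HS_comparison (q : ℝ → ℝ) (hq : ContDiff ℝ (⊤ : ℕ∞) q)
    (hper : ∀ x, q (x + 1) = q x) (κ : ℝ) (hκ : 1 ≤ κ) :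
    ((1/κ) * (∑' n : ℤ, ‖FC q (2 * Real.pi * n)‖ ^ 2 /
        ((2 * Real.pi * n) ^ 2 + 4 * κ ^ 2)) ≤ Qκ κ q ∧
      Qκ κ q ≤ (5/κ) * ∑' n : ℤ, ‖FC q (2 * Real.pi * n)‖ ^ 2 /
        ((2 * Real.pi * n) ^ 2 + 4 * κ ^ 2)) ∧
    (1 / (4 * κ ^ 3)) * (∑' n : ℤ, (1 + (2 * Real.pi * n) ^ 2)⁻¹ *
        ‖FC q (2 * Real.pi * n)‖ ^ 2) ≤ Qκ κ q ∧
      Qκ κ q ≤ (5/κ) * ∑' n : ℤ, (1 + (2 * Real.pi * n) ^ 2)⁻¹ *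
        ‖FC q (2 * Real.pi * n)‖ ^ 2 := by
  have hκ0 : (0:ℝ) < κ := lt_of_lt_of_le one_pos hκ
  simp only [Qκ]
  set f : ℤ → ℝ := fun n => ‖FC q (2 * Real.pi * n)‖ ^ 2 /
      ((2 * Real.pi * n) ^ 2 + 4 * κ ^ 2) with hfdef
  set g : ℤ → ℝ := fun n => (1 + (2 * Real.pi * n) ^ 2)⁻¹ *
      ‖FC q (2 * Real.pi * n)‖ ^ 2 with hgdef
  have hf : Summable f := summable_f q κ hκ
  have hdpos : ∀ n : ℤ, (0:ℝ) < (2 * Real.pi * n) ^ 2 + 4 * κ ^ 2 := fun n => by positivity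
  have hfg : ∀ n, f n ≤ g n := by
    intro n
    simp only [hfdef, hgdef]
    rw [inv_mul_eq_div]
    exact div_le_div_of_nonneg_left (by positivity) (by positivity)
      (by nlinarith [sq_nonneg (2*Real.pi*(n:ℝ))])
  have hgf : ∀ n, g n ≤ 4 * κ ^ 2 * f n := by
    intro n
    simp only [hfdef, hgdef]
    rw [inv_mul_eq_div]
    rw [show 4 * κ ^ 2 * (‖FC q (2 * Real.pi * n)‖ ^ 2 /
        ((2 * Real.pi * n) ^ 2 + 4 * κ ^ 2)) =
        (4 * κ ^ 2 * ‖FC q (2 * Real.pi * n)‖ ^ 2) /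
        ((2 * Real.pi * n) ^ 2 + 4 * κ ^ 2) by ring]
    rw [div_le_div_iff₀ (by positivity) (hdpos n)]
    nlinarith [mul_nonneg (mul_nonneg (show (0:ℝ) ≤ 4*κ^2 - 1 by nlinarith)
      (sq_nonneg (‖FC q (2 * Real.pi * n)‖))) (sq_nonneg (2*Real.pi*(n:ℝ)))]
  have hfnn : ∀ n, 0 ≤ f n := fun n => by positivity
  have hgnn : ∀ n, 0 ≤ g n := fun n => by positivity
  have hg : Summable g := Summable.of_nonneg_of_le hgnn hgf (hf.mul_left _)
  set S : ℝ := ∑' n : ℤ, f n with hSdef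
  set T : ℝ := ∑' n : ℤ, g n with hTdef
  have hS0 : 0 ≤ S := tsum_nonneg hfnn
  have hST : S ≤ T := Summable.tsum_le_tsum hfg hf hg
  have hTS : T ≤ 4 * κ ^ 2 * S := by
    calc T ≤ ∑' n : ℤ, 4 * κ ^ 2 * f n := Summable.tsum_le_tsum hgf hg (hf.mul_left _)
      _ = 4 * κ ^ 2 * S := tsum_mul_left
  have hf0S : f 0 ≤ S := Summable.le_tsum hf 0 fun j _ => hfnn j
  have hf0 : ‖FC q 0‖ ^ 2 / (4 * κ ^ 2) = f 0 := by
    simp only [hfdef]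
    norm_num
  rw [hf0]
  clear_value f g S T
  -- constants
  set t : ℝ := Real.exp (-κ) with htdef
  have ht0 : 0 < t := Real.exp_pos _
  have ht1 : t < 1 := Real.exp_lt_one_iff.mpr (by linarith)
  have htk : t * κ ≤ Real.exp (-1) := exp_neg_le κ
  have he1 : Real.exp (-1) ≤ 0.368 := by
    rw [Real.exp_neg, inv_eq_one_div, div_le_iff₀ (Real.exp_pos _)]
    nlinarith [Real.exp_one_gt_d9]
  have ht368 : t ≤ 0.368 := by nlinarith
  have ht2 : Real.exp (-2 * κ) = t * t := by
    rw [htdef, show (-2 * κ) = (-κ) + (-κ) by ring, Real.exp_add]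
  have hd1 : (0:ℝ) < (1 - t) ^ 2 := pow_pos (by linarith) 2
  set A : ℝ := 2 * t / (1 - t) ^ 2 with hAdef
  set B : ℝ := (1 - Real.exp (-2 * κ)) / (κ * (1 - t) ^ 2) with hBdef
  have hA0 : 0 ≤ A := by rw [hAdef]; positivity
  have hB : 1 / κ ≤ B := by
    rw [hBdef, ht2, div_le_div_iff₀ hκ0 (by positivity)]
    nlinarith
  have hAB : A + B ≤ 5 / κ := by
    have key : 2 * t * κ + (1 - t * t) ≤ 5 * (1 - t) ^ 2 := by nlinarith
    have hABeq : A + B = (2 * t * κ + (1 - t * t)) / (κ * (1 - t) ^ 2) := by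
      rw [hAdef, hBdef, ht2]
      field_simp
    rw [hABeq, div_le_div_iff₀ (by positivity) hκ0]
    nlinarith
  have G1l : (1/κ) * S ≤ A * f 0 + B * S := by
    have h1 : (1/κ) * S ≤ B * S := mul_le_mul_of_nonneg_right hB hS0
    linarith [mul_nonneg hA0 (hfnn 0)]
  have G1u : A * f 0 + B * S ≤ (5/κ) * S := by
    have h1 : A * f 0 ≤ A * S := mul_le_mul_of_nonneg_left hf0S hA0
    have h2 : (A + B) * S ≤ (5/κ) * S := mul_le_mul_of_nonneg_right hAB hS0
    rw [add_mul] at h2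
    linarith
  refine ⟨⟨G1l, G1u⟩, ?_, ?_⟩
  · calc (1 / (4 * κ ^ 3)) * T ≤ (1 / (4 * κ ^ 3)) * (4 * κ ^ 2 * S) :=
          mul_le_mul_of_nonneg_left hTS (by positivity)
      _ = (1/κ) * S := by field_simp
      _ ≤ A * f 0 + B * S := G1l
  · calc A * f 0 + B * S ≤ (5/κ) * S := G1u
      _ ≤ (5/κ) * T := mul_le_mul_of_nonneg_left hST (by positivity)
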